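/- Level-based dependency of matrix powers: let u be a vertex with dist_{G_A}(r,u) = i where i ≥ 1, and let p ∈ ℕ. If the vector y : n → R satisfies y v = ((A^p) *ᵥ x) v for every vertex v whose distance from r is i−1, i, or i+1, then (A *ᵥ y) u = ((A^(p+1)) *ᵥ x) u. -/

import Mathlib

open Matrix
/-- The adjacency graph `G_A` of a symmetric square matrix `A`:
vertices are the indices, and `u` is adjacent to `v` iff `u ≠ v` and `A u v ≠ 0`. -/
def Matrix.adjGraph {R : Type*} [CommRing R] {n : Type*}
    (A : Matrix n n R) (hA : Aᵀ = A) : SimpleGraph n where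
  Adj u v := u ≠ v ∧ A u v ≠ 0
  symm := by
    constructor
    intro u v h
    refine ⟨h.1.symm, fun hz => h.2 ?_⟩
    rw [← hA, Matrix.transpose_apply]
    exact hz
  loopless := ⟨fun u h => h.1 rfl⟩

/-- **Level-based dependency of matrix powers.**
Let `A` be a symmetric square matrix with connected adjacency graph `G_A`, rooted at `r`.
Let `u` be a vertex at BFS distance `i ≥ 1` from `r`. If `y` agrees with `A^p *ᵥ x` on
every vertex at distance `i-1`, `i`, or `i+1` from `r`, then
`(A *ᵥ y) u = (A^(p+1) *ᵥ x) u`. -/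
theorem level_based_power_dependency
    {R : Type*} [CommRing R] {n : Type*} [Fintype n] [DecidableEq n]
    (A : Matrix n n R) (hA : Aᵀ = A)
    (hconn : (A.adjGraph hA).Connected) (r : n)
    (u : n) (i : ℕ) (hi : 1 ≤ i) (hu : (A.adjGraph hA).dist r u = i)
    (p : ℕ) (x y : n → R)
    (hy : ∀ v : n,
      ((A.adjGraph hA).dist r v = i - 1 ∨ (A.adjGraph hA).dist r v = i ∨
        (A.adjGraph hA).dist r v = i + 1) →
      y v = (A ^ p).mulVec x v) :
    A.mulVec y u = (A ^ (p + 1)).mulVec x u := by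
  rw [pow_succ', ← Matrix.mulVec_mulVec]
  unfold Matrix.mulVec dotProduct
  apply Finset.sum_congr rfl
  intro v _
  by_cases hAv : A u v = 0
  · simp [hAv]
  · congr 1
    apply hy
    by_cases huv : u = v
    · subst huv; right; left; exact hu
    · have hadj : (A.adjGraph hA).Adj u v := ⟨huv, hAv⟩
      have hd1 : (A.adjGraph hA).dist u v = 1 := (SimpleGraph.dist_eq_one_iff_adj).mpr hadj
      have h1 : (A.adjGraph hA).dist r v ≤ i + 1 := by
        calc (A.adjGraph hA).dist r v ≤ (A.adjGraph hA).dist r u + (A.adjGraph hA).dist u v :=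
              hconn.dist_triangle
          _ = i + 1 := by rw [hu, hd1]
      have h2 : i ≤ (A.adjGraph hA).dist r v + 1 := by
        calc i = (A.adjGraph hA).dist r u := hu.symm
          _ ≤ (A.adjGraph hA).dist r v + (A.adjGraph hA).dist v u := hconn.dist_triangle
          _ = (A.adjGraph hA).dist r v + 1 := by rw [SimpleGraph.dist_comm (u := v) (v := u), hd1]
      omega
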